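/- Let P be a convex polytope that k-tiles ℝ^d with a discrete multiset Λ, let L be a lattice, and let a_1, …, a_n be vectors in ℝ^d such that the translates a_1 + L, …, a_n + L are pairwise disjoint. Let h ∈ ℝ^d be a fixed vector such that every line with direction vector h meets ∂P in finitely many points, and let P^h be the half-open counterpart of P. If Λ is equal (as a multiset, with every multiplicity one) to the disjoint union ⋃_{i=1}^n (a_i + L), then ∑_{i=1}^n L^h_L(v − a_i) = k for all v ∈ ℝ^d. -/

import Mathlib

open Set Pointwise

noncomputable section

abbrev Euc (d : ℕ) : Type := EuclideanSpace ℝ (Fin d)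

/-- A "discrete multiset" of vectors: a multiplicity function with locally finite support. -/
def IsDiscreteMultiset {d : ℕ} (m : Euc d → ℕ) : Prop :=
  ∀ x : Euc d, ∃ U ∈ nhds x, {y : Euc d | y ∈ U ∧ m y ≠ 0}.Finite

/-- `∑_{λ∈Λ} 1_{P+λ}(v)`, counted with multiplicity. -/
def coverCount {d : ℕ} (m : Euc d → ℕ) (P : Set (Euc d)) (v : Euc d) : ℕ :=
  ∑ᶠ l : Euc d, m l * P.indicator 1 (v - l)

/-- The set `∂P + Λ`. -/
def boundarySum {d : ℕ} (P : Set (Euc d)) (m : Euc d → ℕ) : Set (Euc d) :=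
  {x : Euc d | ∃ l : Euc d, m l ≠ 0 ∧ x - l ∈ frontier P}

/-- `P` `k`-tiles `ℝ^d` with the discrete multiset `m`: every point not in `∂P + Λ`
is covered exactly `k` times. -/
def Tiles {d : ℕ} (P : Set (Euc d)) (m : Euc d → ℕ) (k : ℕ) : Prop :=
  ∀ v : Euc d, v ∉ boundarySum P m → coverCount m P v = k

/-- A lattice in ℝ^d: a discrete additive subgroup of full rank, viewed as a set. -/
def IsLattice {d : ℕ} (L : Set (Euc d)) : Prop :=
  ∃ H : AddSubgroup (Euc d), L = (H : Set (Euc d)) ∧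
    DiscreteTopology H ∧ Submodule.span ℝ (H : Set (Euc d)) = ⊤

/-- A set viewed as a multiset with all multiplicities one. -/
def setMult {d : ℕ} (L : Set (Euc d)) : Euc d → ℕ := L.indicator 1

/-- A convex polytope: convex hull of a finite set of points, with nonempty interior. -/
def IsConvexPolytope {d : ℕ} (P : Set (Euc d)) : Prop :=
  (∃ S : Set (Euc d), S.Finite ∧ P = convexHull ℝ S) ∧ (interior P).Nonempty

/-- The half-open counterpart `P^h` of `P` with respect to the direction `h`. -/
def halfOpen {d : ℕ} (P : Set (Euc d)) (h : Euc d) : Set (Euc d) :=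
  {v : Euc d | v ∈ closure P ∧
    ∃ ε : ℝ, 0 < ε ∧ ∀ c : ℝ, 0 < c → c < ε → v + c • h ∈ interior P}

/-- Every line with direction `h` meets `∂P` in finitely many points. -/
def GoodDirection {d : ℕ} (P : Set (Euc d)) (h : Euc d) : Prop :=
  ∀ x : Euc d, {c : ℝ | x + c • h ∈ frontier P}.Finite

/-- `P^h` `k`-tiles `ℝ^d` with the discrete multiset `m`. -/
def TilesHalfOpen {d : ℕ} (P : Set (Euc d)) (h : Euc d) (m : Euc d → ℕ) (k : ℕ) : Prop :=
  ∀ v : Euc d, v ∉ boundarySum P m → coverCount m (halfOpen P h) v = k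

/-- `L_Λ(v) = #(Λ ∩ (−1·P + v))`, counted with multiplicity. -/
def LEnum {d : ℕ} (m : Euc d → ℕ) (P : Set (Euc d)) (v : Euc d) : ℕ :=
  ∑ᶠ l : Euc d, m l * Set.indicator (v +ᵥ ((-1 : ℝ) • P)) 1 l

/-- `L^h_Λ(v) = #(Λ ∩ (−1·P^h + v))`, counted with multiplicity. -/
def LEnumH {d : ℕ} (m : Euc d → ℕ) (P : Set (Euc d)) (h : Euc d) (v : Euc d) : ℕ :=
  LEnum m (halfOpen P h) v

/-- From a finite set of reals, find a positive ε avoiding it on `(0, ε)`. -/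
lemma exists_pos_avoid {F : Set ℝ} (hF : F.Finite) :
    ∃ ε : ℝ, 0 < ε ∧ ∀ c : ℝ, 0 < c → c < ε → c ∉ F := by
  by_cases hne : (F ∩ Set.Ioi 0).Nonempty
  · have Ffin : (F ∩ Set.Ioi 0).Finite := hF.inter_of_left _
    have hs : Ffin.toFinset.Nonempty := by
      rwa [Set.Finite.toFinset_nonempty]
    refine ⟨Ffin.toFinset.min' hs, ?_, ?_⟩
    · have := Ffin.toFinset.min'_mem hs
      rw [Set.Finite.mem_toFinset] at this
      exact this.2
    · intro c hc hlt hcF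
      have hmem : c ∈ Ffin.toFinset := by
        rw [Set.Finite.mem_toFinset]; exact ⟨hcF, hc⟩
      exact absurd (Ffin.toFinset.min'_le _ hmem) (not_le.2 hlt)
  · exact ⟨1, one_pos, fun c hc _ hcF => hne ⟨c, hcF, hc⟩⟩

/-- Key lemma: the half-open indicator at `x` equals the interior indicator at
`x + c • h` for all sufficiently small positive `c`. -/
lemma halfOpen_indicator_eq {d : ℕ} {P : Set (Euc d)} {h : Euc d}
    (hdir : GoodDirection P h) (x : Euc d) :
    ∃ ε : ℝ, 0 < ε ∧ ∀ c : ℝ, 0 < c → c < ε →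
      (halfOpen P h).indicator (1 : Euc d → ℕ) x
        = (interior P).indicator 1 (x + c • h) := by
  obtain ⟨ε, hε, hav⟩ := exists_pos_avoid (hdir x)
  have hcont : Continuous (fun c : ℝ => x + c • h) := by continuity
  have hconn : IsPreconnected ((fun c : ℝ => x + c • h) '' Set.Ioo 0 ε) :=
    isPreconnected_Ioo.image _ hcont.continuousOn
  have hsub : ((fun c : ℝ => x + c • h) '' Set.Ioo 0 ε) ⊆ interior P ∪ (closure P)ᶜ := by
    rintro _ ⟨c, hc, rfl⟩
    have hnf : x + c • h ∉ frontier P := hav c hc.1 hc.2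
    by_cases h1 : x + c • h ∈ closure P
    · left
      by_contra hne
      exact hnf ⟨h1, hne⟩
    · right; exact h1
  have hdisj : Disjoint (interior P) (closure P)ᶜ :=
    Set.disjoint_compl_right_iff_subset.2 interior_subset_closure
  rcases hconn.subset_or_subset isOpen_interior isClosed_closure.isOpen_compl hdisj hsub with
    himg | himg
  · -- eventually interior: x ∈ halfOpen P h
    have hmemI : ∀ c : ℝ, 0 < c → c < ε → x + c • h ∈ interior P := fun c h1 h2 =>
      himg ⟨c, ⟨h1, h2⟩, rfl⟩
    have hxcl : x ∈ closure P := by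
      have htend : Filter.Tendsto (fun c : ℝ => x + c • h) (nhdsWithin 0 (Set.Ioi 0))
          (nhds x) := by
        have := hcont.tendsto 0
        simpa using this.mono_left nhdsWithin_le_nhds
      refine mem_closure_of_tendsto htend ?_
      filter_upwards [Ioo_mem_nhdsGT hε] with c hc
      exact interior_subset (hmemI c hc.1 hc.2)
    have hxh : x ∈ halfOpen P h := ⟨hxcl, ε, hε, hmemI⟩
    refine ⟨ε, hε, fun c h1 h2 => ?_⟩
    rw [Set.indicator_of_mem hxh, Set.indicator_of_mem (hmemI c h1 h2)]; rfl
  · -- eventually outside closure: x ∉ halfOpen P h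
    have hmemO : ∀ c : ℝ, 0 < c → c < ε → x + c • h ∉ closure P := fun c h1 h2 =>
      himg ⟨c, ⟨h1, h2⟩, rfl⟩
    have hxh : x ∉ halfOpen P h := by
      rintro ⟨-, ε', hε', hc⟩
      have h1 : (0 : ℝ) < min ε ε' / 2 := by positivity
      have h2 : min ε ε' / 2 < ε := lt_of_lt_of_le (by linarith [min_le_left ε ε']) le_rfl
      have h3 : min ε ε' / 2 < ε' := lt_of_lt_of_le (by linarith [min_le_right ε ε']) le_rfl
      exact hmemO _ h1 h2 (interior_subset_closure (hc _ h1 h3))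
    refine ⟨ε, hε, fun c h1 h2 => ?_⟩
    rw [Set.indicator_of_notMem hxh,
      Set.indicator_of_notMem fun hm => hmemO c h1 h2 (interior_subset_closure hm)]

/-- The support of a discrete multiset meets any compact set in a finite set. -/
lemma discrete_inter_compact {d : ℕ} {m : Euc d → ℕ} (hm : IsDiscreteMultiset m)
    {K : Set (Euc d)} (hK : IsCompact K) : {x : Euc d | x ∈ K ∧ m x ≠ 0}.Finite := by
  choose U hU hfin using hm
  obtain ⟨t, -, htK⟩ := hK.elim_nhds_subcover U fun x _ => hU x
  have hsub : {x : Euc d | x ∈ K ∧ m x ≠ 0} ⊆ ⋃ y ∈ t, {z : Euc d | z ∈ U y ∧ m z ≠ 0} := by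
    rintro x ⟨hxK, hx⟩
    obtain ⟨y, hy, hxy⟩ := Set.mem_iUnion₂.1 (htK hxK)
    exact Set.mem_iUnion₂.2 ⟨y, hy, hxy, hx⟩
  exact (t.finite_toSet.biUnion fun y _ => hfin y).subset hsub

/-- If `P` `k`-tiles ℝ^d with Λ and Λ is exactly the disjoint union of
the translated lattices `a i + L` (each with multiplicity one), then
`∑ i, L^h_L(v - a i) = k` for all `v`. -/
theorem stmt_10 {d n : ℕ} (P : Set (Euc d)) (hP : IsConvexPolytope P)
    (h : Euc d) (hdir : GoodDirection P h)
    (k : ℕ) (hk : 0 < k) (Λ : Euc d → ℕ) (hΛ : IsDiscreteMultiset Λ)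
    (hTile : Tiles P Λ k)
    (L : Set (Euc d)) (hL : IsLattice L) (a : Fin n → Euc d)
    (hdisj : ∀ i j : Fin n, i ≠ j → Disjoint (a i +ᵥ L) (a j +ᵥ L))
    (heq : Λ = setMult (⋃ i, (a i +ᵥ L))) :
    ∀ v : Euc d, ∑ i, LEnumH (setMult L) P h (v - a i) = k := by
  intro v
  obtain ⟨⟨S0, hS0fin, hPS0⟩, -⟩ := hP
  have hPcomp : IsCompact P := hPS0 ▸ hS0fin.isCompact_convexHull (𝕜 := ℝ)
  have hPcl : IsClosed P := hPcomp.isClosed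
  have hclP : closure P = P := hPcl.closure_eq
  obtain ⟨M, hM⟩ := hPcomp.isBounded.subset_closedBall (0 : Euc d)
  -- the finite set of relevant translation vectors
  have hSfin : {x : Euc d | x ∈ Metric.closedBall v (M + 1) ∧ Λ x ≠ 0}.Finite :=
    discrete_inter_compact hΛ (isCompact_closedBall v (M + 1))
  set S : Finset (Euc d) := hSfin.toFinset with hSdef
  have hmemS : ∀ x : Euc d, x ∈ S ↔ x ∈ Metric.closedBall v (M + 1) ∧ Λ x ≠ 0 := by
    intro x; rw [hSdef, Set.Finite.mem_toFinset]; rfl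
  have hball : ∀ l w' : Euc d, dist w' v ≤ 1 → w' - l ∈ P →
      l ∈ Metric.closedBall v (M + 1) := by
    intro l w' hw hP'
    have h1 : ‖w' - l‖ ≤ M := by
      have := hM hP'
      rwa [Metric.mem_closedBall, dist_zero_right] at this
    rw [Metric.mem_closedBall]
    calc dist l v ≤ dist l w' + dist w' v := dist_triangle _ _ _
      _ ≤ M + 1 := by
          rw [dist_eq_norm, ← norm_neg, neg_sub]
          linarith
  -- choose ε for each point via the key lemma
  choose ε hεpos hεkey using fun x => halfOpen_indicator_eq (P := P) hdir x
  -- the bad set of parameters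
  have hBfin : (⋃ l ∈ S, {c : ℝ | (v - l) + c • h ∈ frontier P}).Finite :=
    S.finite_toSet.biUnion fun l _ => hdir (v - l)
  -- a uniform positive bound
  set T : Finset ℝ := insert (1 / (‖h‖ + 1)) (S.image fun l => ε (v - l)) with hTdef
  have hTne : T.Nonempty := ⟨_, Finset.mem_insert_self _ _⟩
  set ε0 := T.min' hTne with hε0def
  have hε0pos : 0 < ε0 := by
    rw [hε0def, Finset.lt_min'_iff]
    intro y hy
    rw [hTdef, Finset.mem_insert] at hy
    rcases hy with rfl | hy
    · positivity
    · obtain ⟨l, -, rfl⟩ := Finset.mem_image.1 hy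
      exact hεpos _
  -- choose a good parameter c
  obtain ⟨c, hcIoo, hcB⟩ :
      (Set.Ioo (0 : ℝ) ε0 \ ⋃ l ∈ S, {c : ℝ | (v - l) + c • h ∈ frontier P}).Nonempty :=
    ((Set.Ioo_infinite hε0pos).diff hBfin).nonempty
  have hc0 : 0 < c := hcIoo.1
  have hcε : c < ε0 := hcIoo.2
  set w := v + c • h with hwdef
  have hch : ‖c • h‖ ≤ 1 := by
    have h1 : c < 1 / (‖h‖ + 1) :=
      lt_of_lt_of_le hcε (T.min'_le _ (Finset.mem_insert_self _ _))
    have hhn : (0 : ℝ) ≤ ‖h‖ := norm_nonneg h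
    have h2 : c * (‖h‖ + 1) < 1 := by
      rw [← lt_div_iff₀ (by linarith)]; exact h1
    rw [norm_smul, Real.norm_of_nonneg hc0.le]
    nlinarith
  have hdistwv : dist w v ≤ 1 := by
    rw [hwdef, dist_eq_norm]
    simpa using hch
  have hclt : ∀ l ∈ S, c < ε (v - l) := fun l hl =>
    lt_of_lt_of_le hcε
      (T.min'_le _ (Finset.mem_insert_of_mem (Finset.mem_image_of_mem _ hl)))
  -- w is not in the boundary sum
  have hwb : w ∉ boundarySum P Λ := by
    rintro ⟨l, hl0, hlf⟩
    have hlS : l ∈ S := by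
      rw [hmemS]
      refine ⟨hball l w hdistwv ?_, hl0⟩
      exact hclP ▸ frontier_subset_closure hlf
    apply hcB
    refine Set.mem_biUnion hlS ?_
    show (v - l) + c • h ∈ frontier P
    have : (v - l) + c • h = w - l := by rw [hwdef]; abel
    rwa [this]
  -- rewrite the two cover counts as finite sums over S
  have h1 : coverCount Λ P w = ∑ l ∈ S, Λ l * P.indicator 1 (w - l) := by
    apply finsum_eq_sum_of_support_subset
    intro l hl
    rw [Function.mem_support] at hl
    have hΛl : Λ l ≠ 0 := fun hz => hl (by simp [hz])
    have hPm : w - l ∈ P := by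
      by_contra hn
      exact hl (by simp [Set.indicator_of_notMem hn])
    exact Finset.mem_coe.2 ((hmemS l).2 ⟨hball l w hdistwv hPm, hΛl⟩)
  have h2 : coverCount Λ (halfOpen P h) v
      = ∑ l ∈ S, Λ l * (halfOpen P h).indicator 1 (v - l) := by
    apply finsum_eq_sum_of_support_subset
    intro l hl
    rw [Function.mem_support] at hl
    have hΛl : Λ l ≠ 0 := fun hz => hl (by simp [hz])
    have hPm : v - l ∈ P := by
      by_contra hn
      refine hl ?_
      have : v - l ∉ halfOpen P h := fun hm => hn (hclP ▸ hm.1)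
      simp [Set.indicator_of_notMem this]
    exact Finset.mem_coe.2 ((hmemS l).2 ⟨hball l v (by simp) hPm, hΛl⟩)
  -- termwise comparison over S
  have h3 : ∀ l ∈ S, Λ l * (halfOpen P h).indicator 1 (v - l)
      = Λ l * P.indicator 1 (w - l) := by
    intro l hl
    have e1 := hεkey (v - l) c hc0 (hclt l hl)
    have hw : w - l = (v - l) + c • h := by rw [hwdef]; abel
    have hnf : w - l ∉ frontier P := by
      intro hf
      apply hcB
      refine Set.mem_biUnion hl ?_
      show (v - l) + c • h ∈ frontier P
      rwa [← hw]
    have e2 : P.indicator (1 : Euc d → ℕ) (w - l) = (interior P).indicator 1 (w - l) := by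
      by_cases hm : w - l ∈ interior P
      · rw [Set.indicator_of_mem hm, Set.indicator_of_mem (interior_subset hm)]
      · rw [Set.indicator_of_notMem hm, Set.indicator_of_notMem]
        intro hmP
        exact hnf ⟨subset_closure hmP, hm⟩
    rw [e1, ← hw, e2]
  have hcov : coverCount Λ (halfOpen P h) v = k := by
    rw [h2, Finset.sum_congr rfl h3, ← h1]
    exact hTile w hwb
  -- rewrite each LEnumH as a finite sum over S
  have h4 : ∀ i : Fin n, LEnumH (setMult L) P h (v - a i)
      = ∑ l ∈ S, setMult (a i +ᵥ L) l * (halfOpen P h).indicator 1 (v - l) := by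
    intro i
    unfold LEnumH LEnum
    have hterm : ∀ l : Euc d,
        setMult L l * Set.indicator ((v - a i) +ᵥ ((-1 : ℝ) • halfOpen P h)) 1 l
        = (fun μ => setMult (a i +ᵥ L) μ * (halfOpen P h).indicator (1 : Euc d → ℕ) (v - μ))
            (a i + l) := by
      intro l
      have hA : setMult L l = setMult (a i +ᵥ L) (a i + l) := by
        unfold setMult
        have : a i + l ∈ a i +ᵥ L ↔ l ∈ L := by
          constructor
          · rintro ⟨y, hy, he⟩
            have : y = l := by
              have := he
              simp only [vadd_eq_add] at this
              exact add_left_cancel this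
            rwa [← this]
          · intro hl; exact ⟨l, hl, rfl⟩
        by_cases hl : l ∈ L
        · rw [Set.indicator_of_mem hl, Set.indicator_of_mem (this.2 hl)]; rfl
        · rw [Set.indicator_of_notMem hl, Set.indicator_of_notMem (fun hm => hl (this.1 hm))]
      have hB : Set.indicator ((v - a i) +ᵥ ((-1 : ℝ) • halfOpen P h)) (1 : Euc d → ℕ) l
          = (halfOpen P h).indicator 1 (v - (a i + l)) := by
        have hiff : l ∈ (v - a i) +ᵥ ((-1 : ℝ) • halfOpen P h)
            ↔ v - (a i + l) ∈ halfOpen P h := by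
          constructor
          · rintro ⟨y, ⟨q, hq, rfl⟩, he⟩
            simp only [vadd_eq_add] at he
            have hq' : v - (a i + l) = q := by
              rw [← he, neg_one_smul]; abel
            rwa [hq']
          · intro hm
            refine ⟨(-1 : ℝ) • (v - (a i + l)), ⟨v - (a i + l), hm, rfl⟩, ?_⟩
            simp only [vadd_eq_add, neg_one_smul]
            abel
        by_cases hl : l ∈ (v - a i) +ᵥ ((-1 : ℝ) • halfOpen P h)
        · rw [Set.indicator_of_mem hl, Set.indicator_of_mem (hiff.1 hl)]; rfl
        · rw [Set.indicator_of_notMem hl, Set.indicator_of_notMem (fun hm => hl (hiff.2 hm))]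
      rw [hA, hB]
    rw [finsum_congr hterm]
    rw [finsum_comp (g := fun μ => setMult (a i +ᵥ L) μ * (halfOpen P h).indicator (1 : Euc d → ℕ) (v - μ))
      (fun l : Euc d => a i + l) (Equiv.addLeft (a i)).bijective]
    apply finsum_eq_sum_of_support_subset
    intro μ hμ
    rw [Function.mem_support] at hμ
    have hμL : μ ∈ a i +ᵥ L := by
      by_contra hn
      exact hμ (by simp [setMult, Set.indicator_of_notMem hn])
    have hPm : v - μ ∈ P := by
      by_contra hn
      refine hμ ?_
      have : v - μ ∉ halfOpen P h := fun hm => hn (hclP ▸ hm.1)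
      simp [Set.indicator_of_notMem this]
    have hΛμ : Λ μ ≠ 0 := by
      rw [heq]
      have : μ ∈ ⋃ j, a j +ᵥ L := Set.mem_iUnion.2 ⟨i, hμL⟩
      simp [setMult, Set.indicator_of_mem this]
    exact Finset.mem_coe.2 ((hmemS μ).2 ⟨hball μ v (by simp) hPm, hΛμ⟩)
  -- sum of lattice indicators equals Λ
  have h5 : ∀ l : Euc d, (∑ i : Fin n, setMult (a i +ᵥ L) l) = Λ l := by
    intro l
    rw [heq]
    by_cases hl : l ∈ ⋃ i, a i +ᵥ L
    · obtain ⟨i, hi⟩ := Set.mem_iUnion.1 hl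
      rw [setMult, Set.indicator_of_mem hl]
      rw [Finset.sum_eq_single i]
      · simp [setMult, Set.indicator_of_mem hi]
      · intro j _ hji
        unfold setMult
        rw [Set.indicator_of_notMem]
        intro hj
        exact Set.disjoint_left.1 (hdisj j i hji) hj hi
      · intro hni; exact absurd (Finset.mem_univ i) hni
    · rw [setMult, Set.indicator_of_notMem hl]
      apply Finset.sum_eq_zero
      intro i _
      unfold setMult
      rw [Set.indicator_of_notMem]
      exact fun hi => hl (Set.mem_iUnion.2 ⟨i, hi⟩)
  calc ∑ i, LEnumH (setMult L) P h (v - a i)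
      = ∑ i : Fin n, ∑ l ∈ S, setMult (a i +ᵥ L) l * (halfOpen P h).indicator 1 (v - l) :=
        Finset.sum_congr rfl fun i _ => h4 i
    _ = ∑ l ∈ S, ∑ i : Fin n, setMult (a i +ᵥ L) l * (halfOpen P h).indicator 1 (v - l) :=
        Finset.sum_comm
    _ = ∑ l ∈ S, Λ l * (halfOpen P h).indicator 1 (v - l) := by
        refine Finset.sum_congr rfl fun l _ => ?_
        rw [← Finset.sum_mul, h5]
    _ = coverCount Λ (halfOpen P h) v := h2.symm
    _ = k := hcov
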